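/- Orthonormality of the Terracini block (computational content of Proposition 4.1). Let C ∈ ℝ^{l₁×⋯×l_D} be an HOSVD core with vectorization c, let U_d ∈ ℝ^{n_d×l_d} have orthonormal columns, let U_d^⊥ ∈ ℝ^{n_d×(n_d−l_d)} have orthonormal columns with U_dᵀU_d^⊥ = 0 for each d = 1,…,D, and let S ⊂ ℝ^{l₁⋯l_D} be any finite orthonormal set. Then the following set of vectors in ℝ^{n₁⋯n_D} is orthonormal: { (U₁⊗⋯⊗U_D)ċ : ċ ∈ S } ∪ { (U₁⊗⋯⊗U_{d−1}⊗(U_d^⊥e_i(û_j^d)ᵀ)⊗U_{d+1}⊗⋯⊗U_D)c : d = 1,…,D, i = 1,…,n_d−l_d, j = 1,…,l_d }. Equivalently, the Terracini block T(C;U₁,…,U_D;S;(U_d^⊥)) has orthonormal columns. -/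

import Mathlib

open scoped BigOperators
open Matrix

noncomputable section

/-- Euclidean norm of a finitely-indexed real vector. -/
def enorm {ι : Type*} [Fintype ι] (x : ι → ℝ) : ℝ := Real.sqrt (∑ i, x i ^ 2)

/-- Smallest singular value of a real matrix, as the infimum of `‖M x‖` over
Euclidean-unit vectors `x`. -/
def sigmaMin {ι κ : Type*} [Fintype ι] [Fintype κ] (M : Matrix ι κ ℝ) : ℝ :=
  sInf { r | ∃ x : κ → ℝ, _root_.enorm x = 1 ∧ r = _root_.enorm (M.mulVec x) }

/-- Iterated Kronecker product `U 1 ⊗ ⋯ ⊗ U D`, with multi-indices as rows/columns. -/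
def bigKron {D : ℕ} {n l : Fin D → ℕ} (U : ∀ d, Matrix (Fin (n d)) (Fin (l d)) ℝ) :
    Matrix (∀ d, Fin (n d)) (∀ d, Fin (l d)) ℝ :=
  Matrix.of fun i j => ∏ d, U d (i d) (j d)

/-- Reassemble a full multi-index from a value `j` in slot `d` and a complementary index `i`. -/
def assemble {D : ℕ} {l : Fin D → ℕ} (d : Fin D) (j : Fin (l d))
    (i : ∀ d' : {x : Fin D // x ≠ d}, Fin (l d'.1)) : ∀ d', Fin (l d') :=
  fun d' => if h : d' = d then Fin.cast (congrArg l h.symm) j else i ⟨d', h⟩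

/-- The `d`-th flattening `C_(d)` of a tensor `c`, an `l d × ∏_{d' ≠ d} l d'` matrix. -/
def flatten {D : ℕ} {l : Fin D → ℕ} (c : (∀ d, Fin (l d)) → ℝ) (d : Fin D) :
    Matrix (Fin (l d)) (∀ d' : {x : Fin D // x ≠ d}, Fin (l d'.1)) ℝ :=
  Matrix.of fun j i => c (assemble d j i)

/-- `c` is an HOSVD core: each flattening has nonzero, pairwise orthogonal rows. -/
def IsHOSVDCore {D : ℕ} {l : Fin D → ℕ} (c : (∀ d, Fin (l d)) → ℝ) : Prop :=
  ∀ (d : Fin D) (j j' : Fin (l d)),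
    (j ≠ j' → ∑ i, flatten c d j i * flatten c d j' i = 0) ∧ flatten c d j ≠ 0

/-- `σ_j^d`, the norm of the `j`-th row of the `d`-th flattening. -/
def flatSigma {D : ℕ} {l : Fin D → ℕ} (c : (∀ d, Fin (l d)) → ℝ) (d : Fin D)
    (j : Fin (l d)) : ℝ :=
  enorm (flatten c d j)

/-- `û_j^d := (σ_j^d)⁻¹ e_j ∈ ℝ^{l d}`. -/
def uhat {D : ℕ} {l : Fin D → ℕ} (c : (∀ d, Fin (l d)) → ℝ) (d : Fin D) (j : Fin (l d)) :
    Fin (l d) → ℝ :=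
  fun k => if k = j then (flatSigma c d j)⁻¹ else 0

/-- The Terracini block `T(C; U₁,…,U_D; S; (U_d^⊥))`. -/
def terracini {D : ℕ} {n l : Fin D → ℕ} {ι : Type*}
    (c : (∀ d, Fin (l d)) → ℝ)
    (U : ∀ d, Matrix (Fin (n d)) (Fin (l d)) ℝ)
    (Uperp : ∀ d, Matrix (Fin (n d)) (Fin (n d - l d)) ℝ)
    (S : ι → ((∀ d, Fin (l d)) → ℝ)) :
    Matrix (∀ d, Fin (n d)) (ι ⊕ Σ d : Fin D, Fin (n d - l d) × Fin (l d)) ℝ :=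
  Matrix.of fun a col =>
    Sum.elim
      (fun s => (bigKron U).mulVec (S s) a)
      (fun p => (bigKron (Function.update U p.1
          (Matrix.of fun a' b' => Uperp p.1 a' p.2.1 * uhat c p.1 p.2.2 b'))).mulVec c a)
      col

/-- Concatenation of Terracini blocks over `r = 1,…,R`. -/
def terraciniConcat {D R : ℕ} {n : Fin D → ℕ} {ll : Fin R → Fin D → ℕ} {ι : Fin R → Type*}
    (c : ∀ r, (∀ d, Fin (ll r d)) → ℝ)
    (U : ∀ r d, Matrix (Fin (n d)) (Fin (ll r d)) ℝ)
    (Uperp : ∀ r d, Matrix (Fin (n d)) (Fin (n d - ll r d)) ℝ)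
    (S : ∀ r, ι r → ((∀ d, Fin (ll r d)) → ℝ)) :
    Matrix (∀ d, Fin (n d))
      (Σ r, (ι r ⊕ Σ d : Fin D, Fin (n d - ll r d) × Fin (ll r d))) ℝ :=
  Matrix.of fun a p => terracini (c p.1) (U p.1) (Uperp p.1) (S p.1) a p.2

/-- A linear subspace `𝒯` is GL-saturated at `c`. -/
def GLSaturated {D : ℕ} {l : Fin D → ℕ} (T : Submodule ℝ ((∀ d, Fin (l d)) → ℝ))
    (c : (∀ d, Fin (l d)) → ℝ) : Prop :=
  ∀ (d : Fin D) (A : Matrix (Fin (l d)) (Fin (l d)) ℝ),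
    (bigKron (Function.update (fun d' => (1 : Matrix (Fin (l d')) (Fin (l d')) ℝ)) d A)).mulVec c
      ∈ T



section AuxTerracini

variable {D : ℕ} {n l : Fin D → ℕ}

lemma key_kron_inner (A B : ∀ d, Matrix (Fin (n d)) (Fin (l d)) ℝ)
    (x y : (∀ d, Fin (l d)) → ℝ) :
    ∑ a, (bigKron A).mulVec x a * (bigKron B).mulVec y a
      = ∑ p, ∑ q, x p * y q * ∏ d, ∑ a, A d a (p d) * B d a (q d) := by
  simp only [mulVec, dotProduct, bigKron, of_apply, Finset.sum_mul_sum]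
  rw [Finset.sum_comm]
  refine Finset.sum_congr rfl fun p _ => ?_
  rw [Finset.sum_comm]
  refine Finset.sum_congr rfl fun q _ => ?_
  rw [Fintype.prod_sum fun d a => A d a (p d) * B d a (q d), Finset.mul_sum]
  refine Finset.sum_congr rfl fun a _ => ?_
  rw [Finset.prod_mul_distrib]
  ring

lemma prod_delta_pi (p q : ∀ d, Fin (l d)) :
    (∏ d, if p d = q d then (1:ℝ) else 0) = if p = q then 1 else 0 := by
  by_cases h : p = q
  · subst h; simp
  · rw [if_neg h]
    obtain ⟨d, hd⟩ := Function.ne_iff.mp h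
    exact Finset.prod_eq_zero (Finset.mem_univ d) (if_neg hd)

lemma assemble_same (d : Fin D) (j : Fin (l d))
    (i : ∀ d' : {x : Fin D // x ≠ d}, Fin (l d'.1)) : assemble d j i d = j := by
  simp only [assemble, dif_pos rfl]
  exact Fin.ext rfl

lemma assemble_ne (d : Fin D) (j : Fin (l d))
    (i : ∀ d' : {x : Fin D // x ≠ d}, Fin (l d'.1)) (d' : Fin D) (h : d' ≠ d) :
    assemble d j i d' = i ⟨d', h⟩ := by
  simp only [assemble, dif_neg h]

def splitEquiv (d : Fin D) :
    (∀ d', Fin (l d')) ≃ (Fin (l d) × ∀ d' : {x : Fin D // x ≠ d}, Fin (l d'.1)) where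
  toFun p := (p d, fun d' => p d'.1)
  invFun q := assemble d q.1 q.2
  left_inv p := by
    funext d'
    by_cases h : d' = d
    · subst h; exact assemble_same _ _ _
    · exact assemble_ne _ _ _ _ h
  right_inv q := by
    refine Prod.ext (assemble_same _ _ _) ?_
    funext d'
    exact assemble_ne _ _ _ _ d'.2

lemma sum_reindex_slot (d : Fin D) (f : (∀ d', Fin (l d')) → ℝ) :
    ∑ p, f p = ∑ k : Fin (l d), ∑ i2, f (assemble d k i2) := by
  rw [← Equiv.sum_comp (splitEquiv d).symm f, Fintype.sum_prod_type]
  rfl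

lemma flatSigma_sq (c : (∀ d, Fin (l d)) → ℝ) (d : Fin D) (j : Fin (l d)) :
    flatSigma c d j ^ 2 = ∑ i, flatten c d j i ^ 2 := by
  rw [flatSigma, _root_.enorm, Real.sq_sqrt]
  exact Finset.sum_nonneg fun i _ => sq_nonneg _

lemma flatSigma_pos {c : (∀ d, Fin (l d)) → ℝ}
    (hc : IsHOSVDCore c) (d : Fin D) (j : Fin (l d)) : 0 < flatSigma c d j := by
  have hne := (hc d j j).2
  obtain ⟨i0, hi0⟩ := Function.ne_iff.mp hne
  refine Real.sqrt_pos.2 ?_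
  refine Finset.sum_pos' (fun i _ => sq_nonneg _) ⟨i0, Finset.mem_univ _, ?_⟩
  have : flatten c d j i0 ≠ 0 := hi0
  positivity

lemma core_orth {c : (∀ d, Fin (l d)) → ℝ} (hc : IsHOSVDCore c)
    (d : Fin D) (j j' : Fin (l d)) :
    ∑ p, ∑ q, c p * c q * (uhat c d j (p d) * uhat c d j' (q d) *
      ∏ d'' ∈ Finset.univ.erase d, (if p d'' = q d'' then (1:ℝ) else 0))
    = if j = j' then 1 else 0 := by
  have hprod : ∀ (k k' : Fin (l d)) i2 i2',
      (∏ d'' ∈ Finset.univ.erase d,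
        (if assemble d k i2 d'' = assemble d k' i2' d'' then (1:ℝ) else 0))
      = if i2 = i2' then (1:ℝ) else 0 := by
    intro k k' i2 i2'
    by_cases h : i2 = i2'
    · subst h
      rw [if_pos rfl]
      refine Finset.prod_eq_one fun d'' hd'' => ?_
      have hne : d'' ≠ d := (Finset.mem_erase.mp hd'').1
      rw [assemble_ne _ _ _ _ hne, assemble_ne _ _ _ _ hne, if_pos rfl]
    · rw [if_neg h]
      have : ∃ d0 : {x : Fin D // x ≠ d}, i2 d0 ≠ i2' d0 := by
        by_contra h'
        push_neg at h'
        exact h (funext h')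
      obtain ⟨d0, hd0⟩ := this
      refine Finset.prod_eq_zero (Finset.mem_erase.2 ⟨d0.2, Finset.mem_univ _⟩) ?_
      rw [assemble_ne _ _ _ _ d0.2, assemble_ne _ _ _ _ d0.2, if_neg]
      exact fun hh => hd0 hh
  calc ∑ p, ∑ q, c p * c q * (uhat c d j (p d) * uhat c d j' (q d) *
      ∏ d'' ∈ Finset.univ.erase d, (if p d'' = q d'' then (1:ℝ) else 0))
      = ∑ k : Fin (l d), ∑ i2, ∑ k' : Fin (l d), ∑ i2',
          c (assemble d k i2) * c (assemble d k' i2') *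
          (uhat c d j k * uhat c d j' k' * if i2 = i2' then (1:ℝ) else 0) := by
        rw [sum_reindex_slot d]
        refine Finset.sum_congr rfl fun k _ => Finset.sum_congr rfl fun i2 _ => ?_
        rw [sum_reindex_slot d]
        refine Finset.sum_congr rfl fun k' _ => Finset.sum_congr rfl fun i2' _ => ?_
        rw [assemble_same, assemble_same, hprod]
    _ = ∑ i2, c (assemble d j i2) * c (assemble d j' i2) *
          ((flatSigma c d j)⁻¹ * (flatSigma c d j')⁻¹) := by
        simp only [uhat, ite_mul, mul_ite, zero_mul, mul_zero, one_mul, mul_one,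
          Finset.sum_ite_eq, Finset.sum_ite_eq', Finset.mem_univ, if_true,
          Finset.sum_const_zero]
        rw [Finset.sum_comm]
        simp only [Finset.sum_ite_eq, Finset.sum_ite_eq', Finset.mem_univ, if_true]
    _ = if j = j' then 1 else 0 := by
        by_cases hjj : j = j'
        · subst hjj
          rw [if_pos rfl, ← Finset.sum_mul]
          have h1 : ∑ i2, c (assemble d j i2) * c (assemble d j i2)
              = flatSigma c d j ^ 2 := by
            rw [flatSigma_sq]
            exact Finset.sum_congr rfl fun i _ => by simp [flatten, sq]
          rw [h1]
          have hσ := (flatSigma_pos hc d j).ne'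
          rw [sq]
          field_simp
        · rw [if_neg hjj, ← Finset.sum_mul]
          have h0 : ∑ i2, c (assemble d j i2) * c (assemble d j' i2) = 0 :=
            (hc d j j').1 hjj
          rw [h0, zero_mul]

end AuxTerracini


/-- **Proposition 4.1 (computational content).** If `C` is an HOSVD core, the `U_d` have
orthonormal columns, the `U_d^⊥` are admissible orthonormal complements, and `S` is a
finite orthonormal set, then the Terracini block `T(C; U₁,…,U_D; S; (U_d^⊥))` has
orthonormal columns. -/
theorem terracini_block_orthonormal_columns
    {D : ℕ} {n l : Fin D → ℕ} {ι : Type} [Fintype ι] [DecidableEq ι]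
    (c : (∀ d, Fin (l d)) → ℝ)
    (hc : IsHOSVDCore c)
    (U : ∀ d, Matrix (Fin (n d)) (Fin (l d)) ℝ)
    (hU : ∀ d, (U d)ᵀ * U d = 1)
    (Uperp : ∀ d, Matrix (Fin (n d)) (Fin (n d - l d)) ℝ)
    (hUperp : ∀ d, (Uperp d)ᵀ * Uperp d = 1)
    (hUUperp : ∀ d, (U d)ᵀ * Uperp d = 0)
    (S : ι → ((∀ d, Fin (l d)) → ℝ))
    (hSorth : ∀ s s', ∑ i, S s i * S s' i = if s = s' then 1 else 0) :
    (terracini c U Uperp S)ᵀ * terracini c U Uperp S = 1 := by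
  have h1 : ∀ (d : Fin D) (x y : Fin (l d)),
      (∑ a, U d a x * U d a y) = if x = y then (1:ℝ) else 0 := by
    intro d x y
    simpa [Matrix.mul_apply, Matrix.one_apply] using congrFun (congrFun (hU d) x) y
  have h2 : ∀ (d : Fin D) (x : Fin (l d)) (i : Fin (n d - l d)) (v : ℝ),
      (∑ a, U d a x * (Uperp d a i * v)) = 0 := by
    intro d x i v
    have hz : (∑ a, U d a x * Uperp d a i) = 0 := by
      simpa [Matrix.mul_apply] using congrFun (congrFun (hUUperp d) x) i
    calc ∑ a, U d a x * (Uperp d a i * v)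
        = (∑ a, U d a x * Uperp d a i) * v := by
          rw [Finset.sum_mul]; exact Finset.sum_congr rfl fun a _ => by ring
      _ = 0 := by rw [hz, zero_mul]
  have h2' : ∀ (d : Fin D) (x : Fin (l d)) (i : Fin (n d - l d)) (v : ℝ),
      (∑ a, (Uperp d a i * v) * U d a x) = 0 := by
    intro d x i v
    rw [← h2 d x i v]
    exact Finset.sum_congr rfl fun a _ => by ring
  have h3 : ∀ (d : Fin D) (i i' : Fin (n d - l d)) (v w : ℝ),
      (∑ a, (Uperp d a i * v) * (Uperp d a i' * w)) = if i = i' then v * w else 0 := by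
    intro d i i' v w
    have hz : (∑ a, Uperp d a i * Uperp d a i') = if i = i' then (1:ℝ) else 0 := by
      simpa [Matrix.mul_apply, Matrix.one_apply] using congrFun (congrFun (hUperp d) i) i'
    calc ∑ a, (Uperp d a i * v) * (Uperp d a i' * w)
        = (∑ a, Uperp d a i * Uperp d a i') * (v * w) := by
          rw [Finset.sum_mul]; exact Finset.sum_congr rfl fun a _ => by ring
      _ = _ := by rw [hz, ite_mul, one_mul, zero_mul]
  ext col col'
  rw [Matrix.mul_apply]
  simp only [terracini, transpose_apply, of_apply]
  obtain s | ⟨d, i, j⟩ := col <;> obtain s' | ⟨d', i', j'⟩ := col'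
  · -- both from S
    simp only [Sum.elim_inl]
    rw [key_kron_inner]
    simp only [h1, prod_delta_pi]
    have hstep : ∑ p, ∑ q, S s p * S s' q * (if p = q then (1:ℝ) else 0)
        = ∑ p, S s p * S s' p := by
      refine Finset.sum_congr rfl fun p _ => ?_
      simp [mul_ite, mul_zero, mul_one, Finset.sum_ite_eq, Finset.sum_ite_eq']
    rw [hstep, hSorth s s', Matrix.one_apply]
    by_cases hss : s = s' <;> simp [hss]
  · -- S column vs perturbation column
    simp only [Sum.elim_inl, Sum.elim_inr]
    rw [key_kron_inner]
    have hz : ∀ p q : ∀ d0, Fin (l d0),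
        (∏ d'', ∑ a, U d'' a (p d'') *
          (Function.update U d'
            (Matrix.of fun a' b' => Uperp d' a' i' * uhat c d' j' b')) d'' a (q d'')) = 0 := by
      intro p q
      refine Finset.prod_eq_zero (Finset.mem_univ d') ?_
      rw [Function.update_self]
      simpa using h2 d' (p d') i' (uhat c d' j' (q d'))
    simp only [hz, mul_zero, Finset.sum_const_zero]
    exact (Matrix.one_apply_ne (by simp)).symm
  · -- perturbation column vs S column
    simp only [Sum.elim_inl, Sum.elim_inr]
    rw [key_kron_inner]
    have hz : ∀ p q : ∀ d0, Fin (l d0),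
        (∏ d'', ∑ a,
          (Function.update U d
            (Matrix.of fun a' b' => Uperp d a' i * uhat c d j b')) d'' a (p d'') *
          U d'' a (q d'')) = 0 := by
      intro p q
      refine Finset.prod_eq_zero (Finset.mem_univ d) ?_
      rw [Function.update_self]
      simpa using h2' d (q d) i (uhat c d j (p d))
    simp only [hz, mul_zero, Finset.sum_const_zero]
    exact (Matrix.one_apply_ne (by simp)).symm
  · -- two perturbation columns
    simp only [Sum.elim_inr]
    rw [key_kron_inner]
    rcases eq_or_ne d d' with rfl | hdd
    · rcases eq_or_ne i i' with rfl | hii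
      · have hterm : ∀ p q : ∀ d0, Fin (l d0),
            (∏ d'', ∑ a,
              (Function.update U d
                (Matrix.of fun a' b' => Uperp d a' i * uhat c d j b')) d'' a (p d'') *
              (Function.update U d
                (Matrix.of fun a' b' => Uperp d a' i * uhat c d j' b')) d'' a (q d''))
            = uhat c d j (p d) * uhat c d j' (q d) *
              ∏ d'' ∈ Finset.univ.erase d, (if p d'' = q d'' then (1:ℝ) else 0) := by
          intro p q
          rw [← Finset.mul_prod_erase _ _ (Finset.mem_univ d)]
          congr 1
          · rw [Function.update_self, Function.update_self]
            have := h3 d i i (uhat c d j (p d)) (uhat c d j' (q d))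
            rw [if_pos rfl] at this
            simpa using this
          · refine Finset.prod_congr rfl fun d'' hd'' => ?_
            have hne : d'' ≠ d := (Finset.mem_erase.mp hd'').1
            rw [Function.update_of_ne hne, Function.update_of_ne hne]
            exact h1 d'' (p d'') (q d'')
        calc ∑ p, ∑ q, c p * c q * _ = ∑ p, ∑ q, c p * c q *
              (uhat c d j (p d) * uhat c d j' (q d) *
                ∏ d'' ∈ Finset.univ.erase d, (if p d'' = q d'' then (1:ℝ) else 0)) :=
            Finset.sum_congr rfl fun p _ => Finset.sum_congr rfl fun q _ => by
              rw [hterm p q]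
          _ = if j = j' then 1 else 0 := core_orth hc d j j'
          _ = _ := by
            rw [Matrix.one_apply]
            by_cases hjj : j = j' <;> simp [hjj]
      · have hz : ∀ p q : ∀ d0, Fin (l d0),
            (∏ d'', ∑ a,
              (Function.update U d
                (Matrix.of fun a' b' => Uperp d a' i * uhat c d j b')) d'' a (p d'') *
              (Function.update U d
                (Matrix.of fun a' b' => Uperp d a' i' * uhat c d j' b')) d'' a (q d'')) = 0 := by
          intro p q
          refine Finset.prod_eq_zero (Finset.mem_univ d) ?_
          rw [Function.update_self, Function.update_self]
          have := h3 d i i' (uhat c d j (p d)) (uhat c d j' (q d))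
          rw [if_neg hii] at this
          simpa using this
        simp only [hz, mul_zero, Finset.sum_const_zero]
        exact (Matrix.one_apply_ne (by simp [hii])).symm
    · have hz : ∀ p q : ∀ d0, Fin (l d0),
          (∏ d'', ∑ a,
            (Function.update U d
              (Matrix.of fun a' b' => Uperp d a' i * uhat c d j b')) d'' a (p d'') *
            (Function.update U d'
              (Matrix.of fun a' b' => Uperp d' a' i' * uhat c d' j' b')) d'' a (q d'')) = 0 := by
        intro p q
        refine Finset.prod_eq_zero (Finset.mem_univ d) ?_
        rw [Function.update_self, Function.update_of_ne hdd]
        simpa using h2' d (q d) i (uhat c d j (p d))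
      simp only [hz, mul_zero, Finset.sum_const_zero]
      exact (Matrix.one_apply_ne (by simp [hdd])).symm

end
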